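/- The function D₀(x) = y − ln(1 + y), where y = 7/(324 x³(35x² + 33)), is strictly decreasing on the interval (1, ∞); equivalently, its derivative with respect to x equals −(49/324)(175x² + 99) / (x⁴(35x² + 33)²(11340x⁵ + 10692x³ + 7)), which is negative for x > 1. -/

import Mathlib

noncomputable def D₀ (x : ℝ) : ℝ :=
  7 / (324 * x ^ 3 * (35 * x ^ 2 + 33))
    - Real.log (1 + 7 / (324 * x ^ 3 * (35 * x ^ 2 + 33)))

lemma D₀_hasDerivAt (x : ℝ) (hx : 1 < x) :
    HasDerivAt D₀ (-(49 / 324) * ((175 * x ^ 2 + 99) /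
      (x ^ 4 * (35 * x ^ 2 + 33) ^ 2 * (11340 * x ^ 5 + 10692 * x ^ 3 + 7)))) x := by
  have hx0 : 0 < x := by linarith
  have hq : (0:ℝ) < 35 * x ^ 2 + 33 := by positivity
  have hd0 : (0:ℝ) < 324 * x ^ 3 * (35 * x ^ 2 + 33) := by positivity
  have hdne : (324 * x ^ 3 * (35 * x ^ 2 + 33)) ≠ 0 := ne_of_gt hd0
  have hd : HasDerivAt (fun x : ℝ => 324 * x ^ 3 * (35 * x ^ 2 + 33))
      ((324 * (3 * x ^ 2)) * (35 * x ^ 2 + 33) + (324 * x ^ 3) * (35 * (2 * x))) x := by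
    have h := ((hasDerivAt_pow 3 x).const_mul 324).mul
      (((hasDerivAt_pow 2 x).const_mul 35).add_const 33)
    exact h.congr_deriv (by norm_num)
  have hg : HasDerivAt (fun x : ℝ => 7 / (324 * x ^ 3 * (35 * x ^ 2 + 33)))
      ((0 * (324 * x ^ 3 * (35 * x ^ 2 + 33)) -
        7 * ((324 * (3 * x ^ 2)) * (35 * x ^ 2 + 33) + (324 * x ^ 3) * (35 * (2 * x)))) /
        (324 * x ^ 3 * (35 * x ^ 2 + 33)) ^ 2) x :=
    (hasDerivAt_const x (7:ℝ)).div hd hdne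
  have h1g : (0:ℝ) < 1 + 7 / (324 * x ^ 3 * (35 * x ^ 2 + 33)) := by positivity
  have hlog : HasDerivAt (fun x : ℝ =>
      Real.log (1 + 7 / (324 * x ^ 3 * (35 * x ^ 2 + 33))))
      (((0 * (324 * x ^ 3 * (35 * x ^ 2 + 33)) -
        7 * ((324 * (3 * x ^ 2)) * (35 * x ^ 2 + 33) + (324 * x ^ 3) * (35 * (2 * x)))) /
        (324 * x ^ 3 * (35 * x ^ 2 + 33)) ^ 2) /
        (1 + 7 / (324 * x ^ 3 * (35 * x ^ 2 + 33)))) x :=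
    (hg.const_add 1).log (ne_of_gt h1g)
  have := hg.sub hlog
  refine this.congr_deriv ?_
  have hs : (11340 * x ^ 5 + 10692 * x ^ 3 + 7) ≠ 0 := by positivity
  have h1gne := ne_of_gt h1g
  field_simp
  ring

theorem D₀_strictly_decreasing :
    StrictAntiOn D₀ (Set.Ioi (1 : ℝ)) ∧
    ∀ x : ℝ, 1 < x →
      deriv D₀ x = -(49 / 324) * ((175 * x ^ 2 + 99) /
        (x ^ 4 * (35 * x ^ 2 + 33) ^ 2 * (11340 * x ^ 5 + 10692 * x ^ 3 + 7))) ∧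
      deriv D₀ x < 0 := by
  have key : ∀ x : ℝ, 1 < x → deriv D₀ x = -(49 / 324) * ((175 * x ^ 2 + 99) /
      (x ^ 4 * (35 * x ^ 2 + 33) ^ 2 * (11340 * x ^ 5 + 10692 * x ^ 3 + 7))) :=
    fun x hx => (D₀_hasDerivAt x hx).deriv
  have neg : ∀ x : ℝ, 1 < x → deriv D₀ x < 0 := by
    intro x hx
    rw [key x hx]
    have hx0 : 0 < x := by linarith
    have h : (0:ℝ) < (175 * x ^ 2 + 99) /
        (x ^ 4 * (35 * x ^ 2 + 33) ^ 2 * (11340 * x ^ 5 + 10692 * x ^ 3 + 7)) := by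
      positivity
    nlinarith
  refine ⟨?_, fun x hx => ⟨key x hx, neg x hx⟩⟩
  apply strictAntiOn_of_deriv_neg (convex_Ioi 1)
  · exact fun x hx =>
      ((D₀_hasDerivAt x hx).differentiableAt.continuousAt).continuousWithinAt
  · intro x hx
    rw [interior_Ioi] at hx
    exact neg x hx
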